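/- arXiv:2102.07149 — 2 statements merged into one kernel-verified Lean document; each statement's English description precedes it below -/
import Mathlib

section
/- Let k > 3 and p ≥ 1. Then (R^p·ω)(e_{k−1}, e_k, e_1, e_{k−1}, …, e_1, e_{k−1}, e_1, e_2), with the leading pair (e_{k−1}, e_k) followed by p−1 pairs (e_1, e_{k−1}) and ending with e_1, e_2, equals ε^p α (ω(e_1, e_k) + ω(e_2, e_{k−1})) + ε^p ω(e_2, e_k). -/
set_option linter.unusedSectionVars false

noncomputable section

/-- Gauss-equation curvature `R(X,Y)Z = h(Y,Z)·S(X) − h(X,Z)·S(Y)`. -/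
def RR {V : Type*} [AddCommGroup V] [Module ℝ V]
    (h : V →ₗ[ℝ] V →ₗ[ℝ] ℝ) (S : V →ₗ[ℝ] V) (X Y Z : V) : V :=
  h Y Z • S X - h X Z • S Y

/-- One application of the curvature action on an `m`-linear form (encoded as a
function on lists of vectors): `(R·T)(X,Y,Z₁,…,Zₘ) = −∑ᵢ T(Z₁,…,R(X,Y)Zᵢ,…,Zₘ)`;
the two newest (leftmost) arguments are consumed. -/
def RAct {V : Type*} [AddCommGroup V] [Module ℝ V]
    (h : V →ₗ[ℝ] V →ₗ[ℝ] ℝ) (S : V →ₗ[ℝ] V) (T : List V → ℝ) : List V → ℝ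
  | X :: Y :: Zs =>
      -∑ i ∈ Finset.range Zs.length, T (Zs.set i (RR h S X Y (Zs.getD i 0)))
  | _ => 0

/-- `R^p · ω`, as a function on lists of vectors (of length `2p+2`):
`R⁰·ω = ω` and `R^p·ω = R·(R^{p−1}·ω)`. -/
def Rpow {V : Type*} [AddCommGroup V] [Module ℝ V]
    (h : V →ₗ[ℝ] V →ₗ[ℝ] ℝ) (S : V →ₗ[ℝ] V) (ω : V →ₗ[ℝ] V →ₗ[ℝ] ℝ) (p : ℕ) :
    List V → ℝ :=
  (RAct h S)^[p] (fun l => ω (l.getD 0 0) (l.getD 1 0))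

/-- The list `X, Y, X, Y, …` with `p` pairs `(X, Y)`. -/
def pairList {V : Type*} (X Y : V) : ℕ → List V
  | 0 => []
  | p + 1 => X :: Y :: pairList X Y p

/-- The list `f 1, y, f 2, y, …, f p, y`. -/
def interleave {V : Type*} (f : ℕ → V) (y : V) : ℕ → List V
  | 0 => []
  | p + 1 => interleave f y p ++ [f (p + 1), y]

section Aux

variable {V : Type*} [AddCommGroup V] [Module ℝ V]
variable (h ω : V →ₗ[ℝ] V →ₗ[ℝ] ℝ) (S : V →ₗ[ℝ] V)

lemma RR_swap (X Y Z : V) : RR h S Y X Z = -RR h S X Y Z := by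
  simp only [RR]; abel

lemma RR_self (X Z : V) : RR h S X X Z = 0 := by simp [RR]

lemma RR_lin1 (r : ℝ) (u v Y Z : V) :
    RR h S (r • u + v) Y Z = r • RR h S u Y Z + RR h S v Y Z := by
  simp only [RR, map_add, map_smul, LinearMap.add_apply, LinearMap.smul_apply,
    smul_eq_mul]
  module

lemma RR_lin2 (r : ℝ) (X u v Z : V) :
    RR h S X (r • u + v) Z = r • RR h S X u Z + RR h S X v Z := by
  simp only [RR, map_add, map_smul, LinearMap.add_apply, LinearMap.smul_apply,
    smul_eq_mul]
  module

lemma RR_lin3 (r : ℝ) (X Y u v : V) :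
    RR h S X Y (r • u + v) = r • RR h S X Y u + RR h S X Y v := by
  simp only [RR, map_add, map_smul, smul_eq_mul]
  module

lemma Rpow_zero (l : List V) : Rpow h S ω 0 l = ω (l.getD 0 0) (l.getD 1 0) := rfl

lemma Rpow_succ (p : ℕ) (X Y : V) (Zs : List V) :
    Rpow h S ω (p + 1) (X :: Y :: Zs) =
      -∑ i ∈ Finset.range Zs.length,
        Rpow h S ω p (Zs.set i (RR h S X Y (Zs.getD i 0))) := by
  rw [Rpow, Function.iterate_succ_apply']
  rfl

lemma pairList_length (x y : V) (q : ℕ) : (pairList x y q).length = 2 * q := by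
  induction q with
  | zero => simp [pairList]
  | succ q ih => simp [pairList, ih]; omega

lemma set_append' (pre l : List V) (i : ℕ) (x : V) :
    (pre ++ l).set (pre.length + i) x = pre ++ l.set i x := by
  induction pre with
  | nil => simp
  | cons y t ih => simp [List.set, Nat.succ_add, ih]

end Aux
section Lin
set_option linter.unusedSectionVars false

variable {V : Type*} [AddCommGroup V] [Module ℝ V]
variable (h ω : V →ₗ[ℝ] V →ₗ[ℝ] ℝ) (S : V →ₗ[ℝ] V)

lemma Rpow_lin (p : ℕ) : ∀ (l : List V) (i : ℕ), l.length = 2 * p + 2 →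
    i < l.length → ∀ (r : ℝ) (u v : V),
    Rpow h S ω p (l.set i (r • u + v)) =
      r * Rpow h S ω p (l.set i u) + Rpow h S ω p (l.set i v) := by
  induction p with
  | zero =>
    intro l i hl hi r u v
    match l, hl with
    | [z0, z1], _ =>
      have hi2 : i = 0 ∨ i = 1 := by
        simp only [List.length_cons, List.length_nil] at hi; omega
      rcases hi2 with rfl | rfl <;>
        simp [Rpow_zero, List.set, List.getD, map_add, map_smul]
  | succ p ih =>
    intro l i hl hi r u v
    match l with
    | X :: Y :: Zs =>
      have hZs : Zs.length = 2 * p + 2 := by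
        simp only [List.length_cons] at hl; omega
      match i with
      | 0 =>
        simp only [List.set_cons_zero]
        rw [Rpow_succ, Rpow_succ, Rpow_succ]
        have key : ∀ j ∈ Finset.range Zs.length,
            Rpow h S ω p (Zs.set j (RR h S (r • u + v) Y (Zs.getD j 0))) =
            r * Rpow h S ω p (Zs.set j (RR h S u Y (Zs.getD j 0))) +
              Rpow h S ω p (Zs.set j (RR h S v Y (Zs.getD j 0))) := by
          intro j hj
          rw [RR_lin1]
          exact ih Zs j hZs (by simpa using hj) r _ _
        rw [Finset.sum_congr rfl key, Finset.sum_add_distrib, ← Finset.mul_sum]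
        ring
      | 1 =>
        simp only [List.set_cons_succ, List.set_cons_zero]
        rw [Rpow_succ, Rpow_succ, Rpow_succ]
        have key : ∀ j ∈ Finset.range Zs.length,
            Rpow h S ω p (Zs.set j (RR h S X (r • u + v) (Zs.getD j 0))) =
            r * Rpow h S ω p (Zs.set j (RR h S X u (Zs.getD j 0))) +
              Rpow h S ω p (Zs.set j (RR h S X v (Zs.getD j 0))) := by
          intro j hj
          rw [RR_lin2]
          exact ih Zs j hZs (by simpa using hj) r _ _
        rw [Finset.sum_congr rfl key, Finset.sum_add_distrib, ← Finset.mul_sum]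
        ring
      | (j + 2) =>
        have hj : j < Zs.length := by
          simp only [List.length_cons] at hi; omega
        simp only [List.set_cons_succ]
        rw [Rpow_succ, Rpow_succ, Rpow_succ]
        simp only [List.length_set]
        have key : ∀ t ∈ Finset.range Zs.length,
            Rpow h S ω p ((Zs.set j (r • u + v)).set t
              (RR h S X Y ((Zs.set j (r • u + v)).getD t 0))) =
            r * Rpow h S ω p ((Zs.set j u).set t
              (RR h S X Y ((Zs.set j u).getD t 0))) +
              Rpow h S ω p ((Zs.set j v).set t
              (RR h S X Y ((Zs.set j v).getD t 0))) := by
          intro t ht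
          simp only [Finset.mem_range] at ht
          rcases eq_or_ne t j with rfl | htj
          · have hg : ∀ w : V, (Zs.set t w).getD t 0 = w := by
              intro w
              simp [List.getD, List.getElem?_set_self, ht]
            rw [hg, hg, hg, List.set_set, List.set_set, List.set_set, RR_lin3]
            exact ih Zs t hZs ht r _ _
          · have hg : ∀ w : V, (Zs.set j w).getD t 0 = Zs.getD t 0 := by
              intro w
              simp [List.getD, List.getElem?_set_ne (Ne.symm htj)]
            rw [hg, hg, hg]
            rw [List.set_comm _ _ (Ne.symm htj), List.set_comm _ _ (Ne.symm htj),
              List.set_comm _ _ (Ne.symm htj)]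
            exact ih (Zs.set t (RR h S X Y (Zs.getD t 0))) j
              (by simp [hZs]) (by simp [hj]) r _ _
        rw [Finset.sum_congr rfl key, Finset.sum_add_distrib, ← Finset.mul_sum]
        ring

end Lin
section Cors
set_option linter.unusedSectionVars false

variable {V : Type*} [AddCommGroup V] [Module ℝ V]
variable (h ω : V →ₗ[ℝ] V →ₗ[ℝ] ℝ) (S : V →ₗ[ℝ] V)

lemma Rpow_set_zero (p : ℕ) (l : List V) (i : ℕ) (hl : l.length = 2 * p + 2)
    (hi : i < l.length) : Rpow h S ω p (l.set i 0) = 0 := by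
  have := Rpow_lin h ω S p l i hl hi 1 0 0
  simp only [one_smul, add_zero, one_mul] at this
  linarith

lemma Rpow_set_two (p : ℕ) (l : List V) (i : ℕ) (hl : l.length = 2 * p + 2)
    (hi : i < l.length) (r s : ℝ) (u v : V) :
    Rpow h S ω p (l.set i (r • u + s • v)) =
      r * Rpow h S ω p (l.set i u) + s * Rpow h S ω p (l.set i v) := by
  have h1 := Rpow_lin h ω S p l i hl hi r u (s • v)
  have h2 := Rpow_lin h ω S p l i hl hi s v 0
  simp only [add_zero] at h2
  have h3 := Rpow_set_zero h ω S p l i hl hi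
  rw [h1, h2, h3]; ring

lemma Rpow_set_smul (p : ℕ) (l : List V) (i : ℕ) (hl : l.length = 2 * p + 2)
    (hi : i < l.length) (r : ℝ) (u : V) :
    Rpow h S ω p (l.set i (r • u)) = r * Rpow h S ω p (l.set i u) := by
  have h2 := Rpow_lin h ω S p l i hl hi r u 0
  simp only [add_zero] at h2
  rw [h2, Rpow_set_zero h ω S p l i hl hi]; ring

lemma sum_prefix (a c : V) (p : ℕ) (φ : V → V) (hφc : φ c = 0) :
    ∀ (q : ℕ) (pre suf : List V), pre.length + (2 * q + suf.length) = 2 * p + 2 →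
    ∑ i ∈ Finset.range (2 * q + suf.length),
      Rpow h S ω p (pre ++ (pairList a c q ++ suf).set i
        (φ ((pairList a c q ++ suf).getD i 0)))
    = (∑ t ∈ Finset.range q,
        Rpow h S ω p (pre ++ (pairList a c t ++
          (φ a :: c :: (pairList a c (q - 1 - t) ++ suf)))))
      + ∑ i ∈ Finset.range suf.length,
        Rpow h S ω p (pre ++ (pairList a c q ++ suf.set i (φ (suf.getD i 0)))) := by
  intro q
  induction q with
  | zero =>
    intro pre suf hlen
    simp [pairList]
  | succ q ih =>
    intro pre suf hlen
    have e2 : 2 * (q + 1) + suf.length = (2 * q + suf.length) + 1 + 1 := by ring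
    rw [e2, Finset.sum_range_succ', Finset.sum_range_succ']
    have hpl : pairList a c (q + 1) ++ suf = a :: c :: (pairList a c q ++ suf) := rfl
    -- f 1 term vanishes
    have hf1 : Rpow h S ω p (pre ++ (pairList a c (q+1) ++ suf).set (0+1)
        (φ ((pairList a c (q+1) ++ suf).getD (0+1) 0))) = 0 := by
      rw [hpl]
      simp only [List.set_cons_succ, List.set_cons_zero, List.getD_cons_succ,
        List.getD_cons_zero, hφc]
      have : pre ++ a :: (0:V) :: (pairList a c q ++ suf) =
          (pre ++ a :: c :: (pairList a c q ++ suf)).set (pre.length + 1) 0 := by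
        rw [set_append']; rfl
      rw [this]
      apply Rpow_set_zero
      · simp [pairList_length]; omega
      · simp; try omega
    -- inner terms via ih
    have hf2 : ∀ i, Rpow h S ω p (pre ++ (pairList a c (q+1) ++ suf).set (i+1+1)
        (φ ((pairList a c (q+1) ++ suf).getD (i+1+1) 0))) =
        Rpow h S ω p ((pre ++ [a, c]) ++ ((pairList a c q ++ suf).set i
          (φ ((pairList a c q ++ suf).getD i 0)))) := by
      intro i
      rw [hpl]
      simp only [List.set_cons_succ, List.getD_cons_succ, List.append_assoc,
        List.cons_append, List.nil_append]
    have hlen' : (pre ++ [a, c]).length + (2 * q + suf.length) = 2 * p + 2 := by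
      simp at hlen ⊢; omega
    rw [Finset.sum_congr rfl (fun i _ => hf2 i), ih (pre ++ [a, c]) suf hlen', hf1]
    -- now reshape RHS
    rw [Finset.sum_range_succ' (fun t => Rpow h S ω p (pre ++ (pairList a c t ++
          (φ a :: c :: (pairList a c (q + 1 - 1 - t) ++ suf))))) q]
    have hterm : ∀ t, Rpow h S ω p ((pre ++ [a, c]) ++ (pairList a c t ++
          (φ a :: c :: (pairList a c (q - 1 - t) ++ suf)))) =
        Rpow h S ω p (pre ++ (pairList a c (t+1) ++
          (φ a :: c :: (pairList a c (q + 1 - 1 - (t+1)) ++ suf)))) := by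
      intro t
      have : q + 1 - 1 - (t+1) = q - 1 - t := by omega
      rw [this]
      congr 1
      show pre ++ [a, c] ++ (pairList a c t ++ _) =
        pre ++ ((a :: c :: pairList a c t) ++ _)
      simp [List.append_assoc]
    have hsuf : ∀ i, Rpow h S ω p ((pre ++ [a, c]) ++ (pairList a c q ++
          suf.set i (φ (suf.getD i 0)))) =
        Rpow h S ω p (pre ++ (pairList a c (q+1) ++ suf.set i (φ (suf.getD i 0)))) := by
      intro i
      congr 1
      show pre ++ [a, c] ++ (pairList a c q ++ _) =
        pre ++ ((a :: c :: pairList a c q) ++ _)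
      simp [List.append_assoc]
    rw [Finset.sum_congr rfl (fun t _ => hterm t), Finset.sum_congr rfl (fun i _ => hsuf i)]
    have hf0 : Rpow h S ω p (pre ++ (pairList a c (q+1) ++ suf).set 0
        (φ ((pairList a c (q+1) ++ suf).getD 0 0))) =
        Rpow h S ω p (pre ++ (pairList a c 0 ++
          (φ a :: c :: (pairList a c (q + 1 - 1 - 0) ++ suf)))) := by
      rw [hpl]; rfl
    rw [hf0]
    ring

end Cors
section Mid
set_option linter.unusedSectionVars false

variable {V : Type*} [AddCommGroup V] [Module ℝ V]
variable (h ω : V →ₗ[ℝ] V →ₗ[ℝ] ℝ) (S : V →ₗ[ℝ] V)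

lemma mid_repr (pre tail : List V) (w : V) :
    pre ++ w :: tail = (pre ++ (0:V) :: tail).set pre.length w := by
  have := set_append' pre ((0:V) :: tail) 0 w
  simpa using this.symm

lemma Rpow_zero_mid (p : ℕ) (pre tail : List V)
    (hlen : pre.length + 1 + tail.length = 2 * p + 2) :
    Rpow h S ω p (pre ++ (0:V) :: tail) = 0 := by
  rw [mid_repr]
  apply Rpow_set_zero <;> simp <;> omega

lemma Rpow_mid_two (p : ℕ) (pre tail : List V)
    (hlen : pre.length + 1 + tail.length = 2 * p + 2) (r s : ℝ) (u v : V) :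
    Rpow h S ω p (pre ++ (r • u + s • v) :: tail) =
      r * Rpow h S ω p (pre ++ u :: tail) + s * Rpow h S ω p (pre ++ v :: tail) := by
  rw [mid_repr pre tail (r • u + s • v), mid_repr pre tail u, mid_repr pre tail v]
  apply Rpow_set_two <;> simp <;> omega

lemma Rpow_mid_smul (p : ℕ) (pre tail : List V)
    (hlen : pre.length + 1 + tail.length = 2 * p + 2) (r : ℝ) (u : V) :
    Rpow h S ω p (pre ++ (r • u) :: tail) = r * Rpow h S ω p (pre ++ u :: tail) := by
  rw [mid_repr pre tail (r • u), mid_repr pre tail u]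
  apply Rpow_set_smul <;> simp <;> omega

variable (a c : V)

lemma lead_expand (X Y : V) (hXc : RR h S X Y c = 0) (q : ℕ) (x y : V) :
    Rpow h S ω (q + 1) (X :: Y :: (pairList a c q ++ [x, y])) =
      -((∑ t ∈ Finset.range q, Rpow h S ω q
          (pairList a c t ++ (RR h S X Y a) :: c :: (pairList a c (q - 1 - t) ++ [x, y])))
        + Rpow h S ω q (pairList a c q ++ [RR h S X Y x, y])
        + Rpow h S ω q (pairList a c q ++ [x, RR h S X Y y])) := by
  rw [Rpow_succ]
  have hlen : (pairList a c q ++ [x, y]).length = 2 * q + [x, y].length := by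
    simp [pairList_length]
  rw [hlen]
  have hsp := sum_prefix h ω S a c q (RR h S X Y) hXc q [] [x, y] (by simp [pairList_length])
  simp only [List.nil_append] at hsp
  rw [hsp]
  congr 1
  rw [show ([x, y] : List V).length = 1 + 1 from rfl, Finset.sum_range_succ',
    Finset.sum_range_succ', Finset.sum_range_zero]
  simp [List.set]
  ring

lemma mid_expand (hac : RR h S a c c = 0) (ha : RR h S a c a = 0)
    (j m : ℕ) (v x y : V) :
    Rpow h S ω (j + m + 1 + 1) (a :: c :: (pairList a c j ++ (v :: c :: (pairList a c m ++ [x, y])))) =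
      -(Rpow h S ω (j + m + 1) (pairList a c j ++ (RR h S a c v) :: c :: (pairList a c m ++ [x, y]))
        + Rpow h S ω (j + m + 1) (pairList a c j ++ v :: c :: (pairList a c m ++ [RR h S a c x, y]))
        + Rpow h S ω (j + m + 1) (pairList a c j ++ v :: c :: (pairList a c m ++ [x, RR h S a c y]))) := by
  rw [Rpow_succ]
  set φ := RR h S a c with hφ
  set suf : List V := v :: c :: (pairList a c m ++ [x, y]) with hsuf
  have hsl : suf.length = 2 * m + 4 := by simp [hsuf, pairList_length]
  have hlen : (pairList a c j ++ suf).length = 2 * j + suf.length := by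
    simp [pairList_length]
  rw [hlen]
  have hsp := sum_prefix h ω S a c (j + m + 1) φ hac j [] suf
    (by simp [pairList_length, hsl]; omega)
  simp only [List.nil_append] at hsp
  rw [hsp]
  -- prefix t-sum dies
  have hts : ∀ t ∈ Finset.range j, Rpow h S ω (j + m + 1)
      (pairList a c t ++ (φ a :: c :: (pairList a c (j - 1 - t) ++ suf))) = 0 := by
    intro t ht
    simp only [Finset.mem_range] at ht
    rw [ha]
    exact Rpow_zero_mid h ω S _ (pairList a c t) _
      (by simp [pairList_length, hsl]; omega)
  rw [Finset.sum_eq_zero hts, zero_add]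
  -- suffix sum: peel two, then second sum_prefix
  rw [show suf.length = (2 * m + 2) + 1 + 1 from by omega, Finset.sum_range_succ',
    Finset.sum_range_succ']
  have hf1 : Rpow h S ω (j + m + 1) (pairList a c j ++ suf.set (0 + 1) (φ (suf.getD (0+1) 0))) = 0 := by
    simp only [hsuf, List.set_cons_succ, List.set_cons_zero, List.getD_cons_succ,
      List.getD_cons_zero, hac]
    have : pairList a c j ++ v :: (0:V) :: (pairList a c m ++ [x, y]) =
        (pairList a c j ++ [v]) ++ (0:V) :: (pairList a c m ++ [x, y]) := by
      simp
    rw [this]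
    exact Rpow_zero_mid h ω S _ _ _ (by simp [pairList_length]; omega)
  rw [hf1, add_zero]
  have hf2 : ∀ i, Rpow h S ω (j + m + 1) (pairList a c j ++ suf.set (i + 1 + 1) (φ (suf.getD (i+1+1) 0))) =
      Rpow h S ω (j + m + 1) ((pairList a c j ++ [v, c]) ++
        ((pairList a c m ++ [x, y]).set i (φ ((pairList a c m ++ [x, y]).getD i 0)))) := by
    intro i
    simp only [hsuf, List.set_cons_succ, List.getD_cons_succ]
    simp [List.append_assoc]
  rw [Finset.sum_congr rfl (fun i _ => hf2 i)]
  rw [show (2 * m + 2 : ℕ) = 2 * m + ([x, y] : List V).length from by simp,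
    sum_prefix h ω S a c (j + m + 1) φ hac m (pairList a c j ++ [v, c]) [x, y]
      (by simp [pairList_length]; omega)]
  have hts2 : ∀ t ∈ Finset.range m, Rpow h S ω (j + m + 1)
      ((pairList a c j ++ [v, c]) ++ (pairList a c t ++ (φ a :: c :: (pairList a c (m - 1 - t) ++ [x, y])))) = 0 := by
    intro t ht
    simp only [Finset.mem_range] at ht
    rw [ha]
    have : (pairList a c j ++ [v, c]) ++ (pairList a c t ++ ((0:V) :: c :: (pairList a c (m - 1 - t) ++ [x, y]))) =
        ((pairList a c j ++ [v, c]) ++ pairList a c t) ++ (0:V) :: (c :: (pairList a c (m - 1 - t) ++ [x, y])) := by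
      simp [List.append_assoc]
    rw [this]
    exact Rpow_zero_mid h ω S _ _ _ (by simp [pairList_length]; omega)
  rw [Finset.sum_eq_zero hts2, zero_add]
  rw [show ([x, y] : List V).length = 1 + 1 from rfl, Finset.sum_range_succ',
    Finset.sum_range_succ', Finset.sum_range_zero]
  simp only [List.set_cons_succ, List.set_cons_zero, List.getD_cons_succ, List.getD_cons_zero]
  have e1 : (pairList a c j ++ [v, c]) ++ (pairList a c m ++ [φ x, y]) =
      pairList a c j ++ v :: c :: (pairList a c m ++ [φ x, y]) := by simp [List.append_assoc]
  have e2 : (pairList a c j ++ [v, c]) ++ (pairList a c m ++ [x, φ y]) =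
      pairList a c j ++ v :: c :: (pairList a c m ++ [x, φ y]) := by simp [List.append_assoc]
  have e0 : pairList a c 0 ++ (φ v :: c :: (pairList a c (j - 1 - 0) ++ suf)) =
      φ v :: c :: (pairList a c (j - 1) ++ suf) := by simp [pairList]
  rw [e1, e2]
  have e3 : suf.set 0 (φ (suf.getD 0 0)) = φ v :: c :: (pairList a c m ++ [x, y]) := by
    simp [hsuf]
  rw [e3]
  ring

end Mid
section Vals
set_option linter.unusedSectionVars false
set_option linter.unnecessarySimpa false
set_option linter.unnecessarySeqFocus false

variable {V : Type*} [AddCommGroup V] [Module ℝ V]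
variable (h ω : V →ₗ[ℝ] V →ₗ[ℝ] ℝ) (S : V →ₗ[ℝ] V)
variable (a b c d : V) (ε α : ℝ)
variable (hw : ∀ x y : V, ω x y = - ω y x)
variable (rac_a : RR h S a c a = 0) (rac_c : RR h S a c c = 0)
variable (rac_b : RR h S a c b = (ε*α) • a + ε • b)
variable (rac_d : RR h S a c d = (-(ε*α)) • c + (-ε) • d)
variable (rcd_a : RR h S c d a = (ε*α) • c + ε • d)
variable (rcd_b : RR h S c d b = (-(ε*α)) • d)
variable (rcd_c : RR h S c d c = 0) (rcd_d : RR h S c d d = 0)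

-- slot helpers for the `G` shape `pairList a c p ++ [x, y]`
lemma G_zero_l (p : ℕ) (y : V) :
    Rpow h S ω p (pairList a c p ++ [(0:V), y]) = 0 :=
  Rpow_zero_mid h ω S p (pairList a c p) [y] (by simp [pairList_length]; try omega)

lemma G_zero_r (p : ℕ) (x : V) :
    Rpow h S ω p (pairList a c p ++ [x, (0:V)]) = 0 := by
  have e : pairList a c p ++ [x, (0:V)] = (pairList a c p ++ [x]) ++ (0:V) :: [] := by
    simp
  rw [e]
  exact Rpow_zero_mid h ω S p _ [] (by simp [pairList_length]; try omega)

lemma G_two_l (p : ℕ) (r s : ℝ) (u v y : V) :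
    Rpow h S ω p (pairList a c p ++ [r • u + s • v, y]) =
      r * Rpow h S ω p (pairList a c p ++ [u, y]) +
        s * Rpow h S ω p (pairList a c p ++ [v, y]) :=
  Rpow_mid_two h ω S p (pairList a c p) [y] (by simp [pairList_length]; try omega) r s u v

lemma G_two_r (p : ℕ) (r s : ℝ) (x u v : V) :
    Rpow h S ω p (pairList a c p ++ [x, r • u + s • v]) =
      r * Rpow h S ω p (pairList a c p ++ [x, u]) +
        s * Rpow h S ω p (pairList a c p ++ [x, v]) := by
  have e : ∀ w : V, pairList a c p ++ [x, w] = (pairList a c p ++ [x]) ++ w :: [] := by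
    simp
  rw [e, e u, e v]
  exact Rpow_mid_two h ω S p _ [] (by simp [pairList_length]; try omega) r s u v

lemma G_smul_r (p : ℕ) (r : ℝ) (x u : V) :
    Rpow h S ω p (pairList a c p ++ [x, r • u]) =
      r * Rpow h S ω p (pairList a c p ++ [x, u]) := by
  have e : ∀ w : V, pairList a c p ++ [x, w] = (pairList a c p ++ [x]) ++ w :: [] := by
    simp
  rw [e, e u]
  exact Rpow_mid_smul h ω S p _ [] (by simp [pairList_length]; try omega) r u

include rac_a rac_c in
lemma G_succ (p : ℕ) (x y : V) :
    Rpow h S ω (p+1) (pairList a c (p+1) ++ [x, y]) =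
      -(Rpow h S ω p (pairList a c p ++ [RR h S a c x, y])
        + Rpow h S ω p (pairList a c p ++ [x, RR h S a c y])) := by
  have e : pairList a c (p+1) ++ [x, y] = a :: c :: (pairList a c p ++ [x, y]) := rfl
  rw [e, lead_expand h ω S a c a c rac_c p x y]
  have hts : ∀ t ∈ Finset.range p, Rpow h S ω p
      (pairList a c t ++ (RR h S a c a) :: c :: (pairList a c (p - 1 - t) ++ [x, y])) = 0 := by
    intro t ht
    simp only [Finset.mem_range] at ht
    rw [rac_a]
    exact Rpow_zero_mid h ω S p (pairList a c t) _ (by simp [pairList_length]; try omega)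
  rw [Finset.sum_eq_zero hts]
  ring

include hw rac_a rac_c in
lemma g_aa (p : ℕ) : Rpow h S ω p (pairList a c p ++ [a, a]) = 0 := by
  cases p with
  | zero =>
    have h0 : ω a a = 0 := by have := hw a a; linarith
    simp [Rpow_zero, pairList, h0]
  | succ p =>
    rw [G_succ h ω S a c rac_a rac_c p a a, rac_a, G_zero_l, G_zero_r]
    ring

include rac_a rac_c in
lemma g_ca (p : ℕ) : Rpow h S ω (p+1) (pairList a c (p+1) ++ [c, a]) = 0 := by
  rw [G_succ h ω S a c rac_a rac_c p c a, rac_c, rac_a, G_zero_l, G_zero_r]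
  ring

include rac_a rac_c in
lemma g_ac (p : ℕ) : Rpow h S ω (p+1) (pairList a c (p+1) ++ [a, c]) = 0 := by
  rw [G_succ h ω S a c rac_a rac_c p a c, rac_c, rac_a, G_zero_l, G_zero_r]
  ring

include rac_a rac_c rac_b in
lemma g_cb (p : ℕ) : Rpow h S ω (p+1) (pairList a c (p+1) ++ [c, b]) =
    (-ε)^(p+1) * (ω c b + α * ω c a) := by
  induction p with
  | zero =>
    rw [G_succ h ω S a c rac_a rac_c 0 c b, rac_c, rac_b, G_zero_l, G_two_r]
    simp [Rpow_zero, pairList]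
    ring
  | succ p ih =>
    rw [G_succ h ω S a c rac_a rac_c (p+1) c b, rac_c, rac_b, G_zero_l, G_two_r, ih,
      g_ca h ω S a c rac_a rac_c p, pow_succ]
    ring

include rac_a rac_c rac_d in
lemma g_da (p : ℕ) : Rpow h S ω (p+1) (pairList a c (p+1) ++ [d, a]) =
    ε^(p+1) * (ω d a + α * ω c a) := by
  induction p with
  | zero =>
    rw [G_succ h ω S a c rac_a rac_c 0 d a, rac_a, rac_d, G_zero_r, G_two_l]
    simp [Rpow_zero, pairList]
    ring
  | succ p ih =>
    rw [G_succ h ω S a c rac_a rac_c (p+1) d a, rac_a, rac_d, G_zero_r, G_two_l, ih,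
      g_ca h ω S a c rac_a rac_c p, pow_succ]
    ring

include rac_a rac_c rac_d in
lemma g_ad (p : ℕ) : Rpow h S ω (p+1) (pairList a c (p+1) ++ [a, d]) =
    ε^(p+1) * (ω a d + α * ω a c) := by
  induction p with
  | zero =>
    rw [G_succ h ω S a c rac_a rac_c 0 a d, rac_a, rac_d, G_zero_l, G_two_r]
    simp [Rpow_zero, pairList]
    ring
  | succ p ih =>
    rw [G_succ h ω S a c rac_a rac_c (p+1) a d, rac_a, rac_d, G_zero_l, G_two_r, ih,
      g_ac h ω S a c rac_a rac_c p, pow_succ]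
    ring

include rac_a rac_c rac_b rac_d in
lemma g_db_step (p : ℕ) : Rpow h S ω (p+1) (pairList a c (p+1) ++ [d, b]) =
    ε * α * Rpow h S ω p (pairList a c p ++ [c, b])
      - ε * α * Rpow h S ω p (pairList a c p ++ [d, a]) := by
  rw [G_succ h ω S a c rac_a rac_c p d b, rac_b, rac_d, G_two_l, G_two_r]
  ring

include hw rac_a rac_c rac_b rac_d in
lemma cancel (p : ℕ) :
    ε * α * Rpow h S ω (p+1) (pairList a c (p+1) ++ [c, b])
      + ε * Rpow h S ω (p+1) (pairList a c (p+1) ++ [d, b])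
      - ε * α * Rpow h S ω (p+1) (pairList a c (p+1) ++ [a, d]) = 0 := by
  rw [g_cb h ω S a b c ε α rac_a rac_c rac_b p,
    g_db_step h ω S a b c d ε α rac_a rac_c rac_b rac_d p,
    g_ad h ω S a c d ε α rac_a rac_c rac_d p]
  cases p with
  | zero =>
    simp only [Rpow_zero, pairList, List.nil_append]
    simp only [List.getD_cons_zero, List.getD_cons_succ]
    rw [hw d a, hw c a]
    ring
  | succ q =>
    rw [g_cb h ω S a b c ε α rac_a rac_c rac_b q,
      g_da h ω S a c d ε α rac_a rac_c rac_d q]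
    rw [hw d a, hw c a]
    rw [pow_succ, pow_succ]
    ring

end Vals
section MVals
set_option linter.unusedSectionVars false
set_option linter.unnecessarySimpa false
set_option linter.unnecessarySeqFocus false

variable {V : Type*} [AddCommGroup V] [Module ℝ V]
variable (h ω : V →ₗ[ℝ] V →ₗ[ℝ] ℝ) (S : V →ₗ[ℝ] V)
variable (a b c d : V) (ε α : ℝ)
variable (hw : ∀ x y : V, ω x y = - ω y x)
variable (rac_a : RR h S a c a = 0) (rac_c : RR h S a c c = 0)
variable (rac_b : RR h S a c b = (ε*α) • a + ε • b)
variable (rac_d : RR h S a c d = (-(ε*α)) • c + (-ε) • d)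
variable (rcd_a : RR h S c d a = (ε*α) • c + ε • d)
variable (rcd_b : RR h S c d b = (-(ε*α)) • d)
variable (rcd_c : RR h S c d c = 0) (rcd_d : RR h S c d d = 0)

include rcd_a in
lemma rdc_a' : RR h S d c a = (-(ε*α)) • c + (-ε) • d := by
  rw [RR_swap, rcd_a]; module

include rcd_b in
lemma rdc_b' : RR h S d c b = (ε*α) • d := by
  rw [RR_swap, rcd_b]; module

include rcd_c in
lemma rdc_c' : RR h S d c c = 0 := by
  rw [RR_swap, rcd_c]; simp

-- helpers for the `M` shape
lemma M_zero_v (P j m : ℕ) (hP : j + m + 1 = P) (x y : V) :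
    Rpow h S ω P (pairList a c j ++ (0:V) :: c :: (pairList a c m ++ [x, y])) = 0 :=
  Rpow_zero_mid h ω S P (pairList a c j) _ (by simp [pairList_length]; omega)

lemma M_two_v (P j m : ℕ) (hP : j + m + 1 = P) (r s : ℝ) (u w x y : V) :
    Rpow h S ω P (pairList a c j ++ (r • u + s • w) :: c :: (pairList a c m ++ [x, y])) =
      r * Rpow h S ω P (pairList a c j ++ u :: c :: (pairList a c m ++ [x, y])) +
        s * Rpow h S ω P (pairList a c j ++ w :: c :: (pairList a c m ++ [x, y])) :=
  Rpow_mid_two h ω S P (pairList a c j) _ (by simp [pairList_length]; omega) r s u w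

lemma M_shape_x (j m : ℕ) (v x y : V) :
    pairList a c j ++ v :: c :: (pairList a c m ++ [x, y]) =
      (pairList a c j ++ v :: c :: pairList a c m) ++ x :: [y] := by
  simp

lemma M_shape_y (j m : ℕ) (v x y : V) :
    pairList a c j ++ v :: c :: (pairList a c m ++ [x, y]) =
      (pairList a c j ++ v :: c :: pairList a c m ++ [x]) ++ y :: [] := by
  simp

lemma M_zero_x (P j m : ℕ) (hP : j + m + 1 = P) (v y : V) :
    Rpow h S ω P (pairList a c j ++ v :: c :: (pairList a c m ++ [(0:V), y])) = 0 := by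
  rw [M_shape_x]
  exact Rpow_zero_mid h ω S P _ _ (by simp [pairList_length]; omega)

lemma M_zero_y (P j m : ℕ) (hP : j + m + 1 = P) (v x : V) :
    Rpow h S ω P (pairList a c j ++ v :: c :: (pairList a c m ++ [x, (0:V)])) = 0 := by
  rw [M_shape_y]
  exact Rpow_zero_mid h ω S P _ _ (by simp [pairList_length]; omega)

lemma M_two_x (P j m : ℕ) (hP : j + m + 1 = P) (r s : ℝ) (v u w y : V) :
    Rpow h S ω P (pairList a c j ++ v :: c :: (pairList a c m ++ [r • u + s • w, y])) =
      r * Rpow h S ω P (pairList a c j ++ v :: c :: (pairList a c m ++ [u, y])) +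
        s * Rpow h S ω P (pairList a c j ++ v :: c :: (pairList a c m ++ [w, y])) := by
  rw [M_shape_x, M_shape_x, M_shape_x]
  exact Rpow_mid_two h ω S P _ _ (by simp [pairList_length]; omega) r s u w

lemma M_two_y (P j m : ℕ) (hP : j + m + 1 = P) (r s : ℝ) (v x u w : V) :
    Rpow h S ω P (pairList a c j ++ v :: c :: (pairList a c m ++ [x, r • u + s • w])) =
      r * Rpow h S ω P (pairList a c j ++ v :: c :: (pairList a c m ++ [x, u])) +
        s * Rpow h S ω P (pairList a c j ++ v :: c :: (pairList a c m ++ [x, w])) := by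
  rw [M_shape_y, M_shape_y, M_shape_y]
  exact Rpow_mid_two h ω S P _ _ (by simp [pairList_length]; omega) r s u w

-- Mf j m c x y = 0
lemma m_cc (m : ℕ) (x y : V) :
    Rpow h S ω (m + 1) (c :: c :: (pairList a c m ++ [x, y])) = 0 := by
  rw [Rpow_succ, neg_eq_zero]
  apply Finset.sum_eq_zero
  intro i hi
  simp only [Finset.mem_range] at hi
  rw [RR_self]
  exact Rpow_set_zero h ω S m _ i (by simp [pairList_length]) (by simpa using hi)

include rac_a rac_c in
lemma m_c : ∀ (j m : ℕ) (x y : V),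
    Rpow h S ω (j + m + 1) (pairList a c j ++ c :: c :: (pairList a c m ++ [x, y])) = 0 := by
  intro j
  induction j with
  | zero =>
    intro m x y
    rw [show 0 + m + 1 = m + 1 from by omega]
    exact m_cc h ω S a c m x y
  | succ j ih =>
    intro m x y
    rw [show j + 1 + m + 1 = j + m + 1 + 1 from by omega]
    have e : pairList a c (j+1) ++ c :: c :: (pairList a c m ++ [x, y]) =
        a :: c :: (pairList a c j ++ (c :: c :: (pairList a c m ++ [x, y]))) := rfl
    rw [e, mid_expand h ω S a c rac_c rac_a j m c x y, rac_c,
      M_zero_v h ω S a c (j+m+1) j m rfl x y, ih m (RR h S a c x) y, ih m x (RR h S a c y)]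
    ring

-- Mf j m d a a = 0
include hw rac_a rac_c rac_d rcd_a rcd_c in
lemma m_daa : ∀ (m j : ℕ),
    Rpow h S ω (j + m + 1) (pairList a c j ++ d :: c :: (pairList a c m ++ [a, a])) = 0 := by
  intro m
  induction m using Nat.strong_induction_on with
  | _ m ihm =>
    intro j
    induction j with
    | zero =>
      rw [show 0 + m + 1 = m + 1 from by omega]
      have e : pairList a c 0 ++ d :: c :: (pairList a c m ++ [a, a]) =
          d :: c :: (pairList a c m ++ [a, a]) := rfl
      rw [e, lead_expand h ω S a c d c (rdc_c' h S c d rcd_c) m a a,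
        rdc_a' h S a c d ε α rcd_a]
      have hts : ∀ t ∈ Finset.range m, Rpow h S ω m
          (pairList a c t ++ ((-(ε*α)) • c + (-ε) • d) :: c ::
            (pairList a c (m - 1 - t) ++ [a, a])) = 0 := by
        intro t ht
        simp only [Finset.mem_range] at ht
        have hP : t + (m - 1 - t) + 1 = m := by omega
        rw [M_two_v h ω S a c m t (m - 1 - t) hP]
        have h1 := m_c h ω S a c rac_a rac_c t (m - 1 - t) a a
        rw [hP] at h1
        have h2 := ihm (m - 1 - t) (by omega) t
        rw [hP] at h2
        rw [h1, h2]; ring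
      rw [Finset.sum_eq_zero hts]
      rw [G_two_l h ω S a c m (-(ε*α)) (-ε) c d a,
        G_two_r h ω S a c m (-(ε*α)) (-ε) a c d]
      -- symmetric sums vanish
      have hs1 : Rpow h S ω m (pairList a c m ++ [c, a]) +
          Rpow h S ω m (pairList a c m ++ [a, c]) = 0 := by
        cases m with
        | zero =>
          simp only [Rpow_zero, pairList, List.nil_append, List.getD_cons_zero,
            List.getD_cons_succ]
          rw [hw c a]; ring
        | succ q =>
          rw [g_ca h ω S a c rac_a rac_c q, g_ac h ω S a c rac_a rac_c q]; ring
      have hs2 : Rpow h S ω m (pairList a c m ++ [d, a]) +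
          Rpow h S ω m (pairList a c m ++ [a, d]) = 0 := by
        cases m with
        | zero =>
          simp only [Rpow_zero, pairList, List.nil_append, List.getD_cons_zero,
            List.getD_cons_succ]
          rw [hw d a]; ring
        | succ q =>
          rw [g_da h ω S a c d ε α rac_a rac_c rac_d q,
            g_ad h ω S a c d ε α rac_a rac_c rac_d q, hw d a, hw c a]
          ring
      linear_combination (ε*α) * hs1 + ε * hs2
    | succ j ihj =>
      rw [show j + 1 + m + 1 = j + m + 1 + 1 from by omega]
      have e : pairList a c (j+1) ++ d :: c :: (pairList a c m ++ [a, a]) =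
          a :: c :: (pairList a c j ++ (d :: c :: (pairList a c m ++ [a, a]))) := rfl
      rw [e, mid_expand h ω S a c rac_c rac_a j m d a a, rac_a, rac_d,
        M_two_v h ω S a c (j+m+1) j m rfl,
        m_c h ω S a c rac_a rac_c j m a a, ihj,
        M_zero_x h ω S a c (j+m+1) j m rfl, M_zero_y h ω S a c (j+m+1) j m rfl]
      ring

-- Mf (j+1) m d a b = 0
include hw rac_a rac_c rac_b rac_d rcd_a rcd_c in
lemma m_dab_succ (j m : ℕ) :
    Rpow h S ω (j + 1 + m + 1) (pairList a c (j+1) ++ d :: c :: (pairList a c m ++ [a, b])) = 0 := by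
  rw [show j + 1 + m + 1 = j + m + 1 + 1 from by omega]
  have e : pairList a c (j+1) ++ d :: c :: (pairList a c m ++ [a, b]) =
      a :: c :: (pairList a c j ++ (d :: c :: (pairList a c m ++ [a, b]))) := rfl
  rw [e, mid_expand h ω S a c rac_c rac_a j m d a b, rac_a, rac_b, rac_d,
    M_two_v h ω S a c (j+m+1) j m rfl,
    m_c h ω S a c rac_a rac_c j m a b,
    M_zero_x h ω S a c (j+m+1) j m rfl,
    M_two_y h ω S a c (j+m+1) j m rfl,
    m_daa h ω S a c d ε α hw rac_a rac_c rac_d rcd_a rcd_c m j]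
  ring

end MVals
section Main
set_option linter.unusedSectionVars false
set_option linter.unnecessarySimpa false
set_option linter.unnecessarySeqFocus false

variable {V : Type*} [AddCommGroup V] [Module ℝ V]
variable (h ω : V →ₗ[ℝ] V →ₗ[ℝ] ℝ) (S : V →ₗ[ℝ] V)
variable (a b c d : V) (ε α : ℝ)
variable (hw : ∀ x y : V, ω x y = - ω y x)
variable (rac_a : RR h S a c a = 0) (rac_c : RR h S a c c = 0)
variable (rac_b : RR h S a c b = (ε*α) • a + ε • b)
variable (rac_d : RR h S a c d = (-(ε*α)) • c + (-ε) • d)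
variable (rcd_a : RR h S c d a = (ε*α) • c + ε • d)
variable (rcd_b : RR h S c d b = (-(ε*α)) • d)
variable (rcd_c : RR h S c d c = 0) (rcd_d : RR h S c d d = 0)

include hw rac_a rac_c rac_b rac_d rcd_a rcd_c in
lemma tsum_d (m : ℕ) (r s : ℝ) :
    ∑ t ∈ Finset.range (m+1), Rpow h S ω (m+1)
      (pairList a c t ++ (r • c + s • d) :: c :: (pairList a c (m + 1 - 1 - t) ++ [a, b]))
    = s * Rpow h S ω (m+1) (d :: c :: (pairList a c m ++ [a, b])) := by
  rw [Finset.sum_eq_single_of_mem 0 (Finset.mem_range.mpr (Nat.succ_pos m))]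
  · rw [show m + 1 - 1 - 0 = m from by omega,
      M_two_v h ω S a c (m+1) 0 m (by omega)]
    have h1 := m_c h ω S a c rac_a rac_c 0 m a b
    rw [show 0 + m + 1 = m + 1 from by omega] at h1
    rw [h1]
    have e : pairList a c 0 ++ d :: c :: (pairList a c m ++ [a, b]) =
        d :: c :: (pairList a c m ++ [a, b]) := rfl
    rw [e]; ring
  · intro t ht htne
    obtain ⟨u, rfl⟩ : ∃ u, t = u + 1 := ⟨t - 1, by omega⟩
    simp only [Finset.mem_range] at ht
    rw [show m + 1 - 1 - (u + 1) = m - 1 - u from by omega,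
      M_two_v h ω S a c (m+1) (u+1) (m-1-u) (by omega)]
    have h1 := m_c h ω S a c rac_a rac_c (u+1) (m-1-u) a b
    rw [show u + 1 + (m-1-u) + 1 = m + 1 from by omega] at h1
    have h2 := m_dab_succ h ω S a b c d ε α hw rac_a rac_c rac_b rac_d rcd_a rcd_c u (m-1-u)
    rw [show u + 1 + (m-1-u) + 1 = m + 1 from by omega] at h2
    rw [h1, h2]; ring

include hw rac_a rac_c rac_b rac_d rcd_a rcd_b rcd_c in
lemma b_closed : ∀ m : ℕ, Rpow h S ω (m+1) (d :: c :: (pairList a c m ++ [a, b])) =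
    -(ε^(m+1)) * (α * (ω a d + ω b c) + ω b d) := by
  intro m
  induction m with
  | zero =>
    rw [lead_expand h ω S a c d c (rdc_c' h S c d rcd_c) 0 a b,
      rdc_a' h S a c d ε α rcd_a, rdc_b' h S b c d ε α rcd_b,
      G_two_l h ω S a c 0 (-(ε*α)) (-ε) c d b, G_smul_r h ω S a c 0 (ε*α) a d]
    simp only [Finset.range_zero, Finset.sum_empty, Rpow_zero, pairList, List.nil_append,
      List.getD_cons_zero, List.getD_cons_succ]
    rw [hw c b, hw d b]
    ring
  | succ m ih =>
    rw [lead_expand h ω S a c d c (rdc_c' h S c d rcd_c) (m+1) a b]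
    simp only [rdc_a' h S a c d ε α rcd_a, rdc_b' h S b c d ε α rcd_b]
    rw [tsum_d h ω S a b c d ε α hw rac_a rac_c rac_b rac_d rcd_a rcd_c m (-(ε*α)) (-ε),
      G_two_l h ω S a c (m+1) (-(ε*α)) (-ε) c d b, G_smul_r h ω S a c (m+1) (ε*α) a d,
      ih]
    have hc := cancel h ω S a b c d ε α hw rac_a rac_c rac_b rac_d m
    rw [pow_succ]
    linear_combination hc

include hw rac_a rac_c rac_b rac_d rcd_a rcd_b rcd_c in
lemma main_eval : ∀ q : ℕ, Rpow h S ω (q+1) (c :: d :: (pairList a c q ++ [a, b])) =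
    ε^(q+1) * α * (ω a d + ω b c) + ε^(q+1) * ω b d := by
  intro q
  cases q with
  | zero =>
    rw [lead_expand h ω S a c c d rcd_c 0 a b, rcd_a, rcd_b,
      G_two_l h ω S a c 0 (ε*α) ε c d b, G_smul_r h ω S a c 0 (-(ε*α)) a d]
    simp only [Finset.range_zero, Finset.sum_empty, Rpow_zero, pairList, List.nil_append,
      List.getD_cons_zero, List.getD_cons_succ]
    rw [hw c b, hw d b]
    ring
  | succ m =>
    rw [lead_expand h ω S a c c d rcd_c (m+1) a b]
    simp only [rcd_a, rcd_b]
    rw [tsum_d h ω S a b c d ε α hw rac_a rac_c rac_b rac_d rcd_a rcd_c m (ε*α) ε,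
      G_two_l h ω S a c (m+1) (ε*α) ε c d b, G_smul_r h ω S a c (m+1) (-(ε*α)) a d,
      b_closed h ω S a b c d ε α hw rac_a rac_c rac_b rac_d rcd_a rcd_b rcd_c m]
    have hc := cancel h ω S a b c d ε α hw rac_a rac_c rac_b rac_d m
    rw [pow_succ]
    linear_combination -hc

end Main
theorem stmt9
    {V : Type*} [AddCommGroup V] [Module ℝ V]
    (n : ℕ) (hn : 2 ≤ n) (e : ℕ → V)
    (hbasis : ∃ b : Module.Basis (Fin (2 * n)) ℝ V, ∀ i : Fin (2 * n), b i = e (i.1 + 1))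
    (h ω : V →ₗ[ℝ] V →ₗ[ℝ] ℝ)
    (hsymm : ∀ X Y, h X Y = h Y X)
    (halt : ∀ X, ω X X = 0)
    (S : V →ₗ[ℝ] V)
    (k : ℕ) (hk2 : 2 ≤ k) (hk : k ≤ 2 * n)
    (α ε : ℝ) (hε : ε = 1 ∨ ε = -1)
    (hS1 : ∀ i, 1 ≤ i → i ≤ k - 1 → S (e i) = α • e i + e (i + 1))
    (hS2 : S (e k) = α • e k)
    (hh1 : ∀ i j, 1 ≤ i → i ≤ k → 1 ≤ j → j ≤ k → i + j = k + 1 → h (e i) (e j) = ε)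
    (hh0 : ∀ i j, 1 ≤ i → i ≤ 2 * n → 1 ≤ j → j ≤ 2 * n → min i j ≤ k →
      ¬(i ≤ k ∧ j ≤ k ∧ i + j = k + 1) → h (e i) (e j) = 0)
    (hk3 : 3 < k)
    (p : ℕ) (hp : 1 ≤ p) :
    Rpow h S ω p ([e (k - 1), e k] ++ pairList (e 1) (e (k - 1)) (p - 1) ++ [e 1, e 2]) =
      ε ^ p * α * (ω (e 1) (e k) + ω (e 2) (e (k - 1))) + ε ^ p * ω (e 2) (e k) := by
  have hw : ∀ x y : V, ω x y = -ω y x := by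
    intro x y
    have h1 := halt (x + y)
    have h2 := halt x
    have h3 := halt y
    simp only [map_add, LinearMap.add_apply] at h1
    rw [h2, h3] at h1
    linarith
  -- h values
  have hAA : h (e 1) (e 1) = 0 := hh0 1 1 (by omega) (by omega) (by omega) (by omega) (by omega) (by omega)
  have hAB : h (e 1) (e 2) = 0 := hh0 1 2 (by omega) (by omega) (by omega) (by omega) (by omega) (by omega)
  have hAC : h (e 1) (e (k-1)) = 0 := hh0 1 (k-1) (by omega) (by omega) (by omega) (by omega) (by omega) (by omega)
  have hAD : h (e 1) (e k) = ε := hh1 1 k (by omega) (by omega) (by omega) (by omega) (by omega)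
  have hCA : h (e (k-1)) (e 1) = 0 := hh0 (k-1) 1 (by omega) (by omega) (by omega) (by omega) (by omega) (by omega)
  have hCB : h (e (k-1)) (e 2) = ε := hh1 (k-1) 2 (by omega) (by omega) (by omega) (by omega) (by omega)
  have hCC : h (e (k-1)) (e (k-1)) = 0 := hh0 (k-1) (k-1) (by omega) (by omega) (by omega) (by omega) (by omega) (by omega)
  have hCD : h (e (k-1)) (e k) = 0 := hh0 (k-1) k (by omega) (by omega) (by omega) (by omega) (by omega) (by omega)
  have hDA : h (e k) (e 1) = ε := hh1 k 1 (by omega) (by omega) (by omega) (by omega) (by omega)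
  have hDB : h (e k) (e 2) = 0 := hh0 k 2 (by omega) (by omega) (by omega) (by omega) (by omega) (by omega)
  have hDC : h (e k) (e (k-1)) = 0 := hh0 k (k-1) (by omega) (by omega) (by omega) (by omega) (by omega) (by omega)
  -- S values
  have hSa : S (e 1) = α • e 1 + e 2 := hS1 1 (by omega) (by omega)
  have hSc : S (e (k-1)) = α • e (k-1) + e k := by
    have h1 := hS1 (k-1) (by omega) (by omega)
    rw [show k - 1 + 1 = k from by omega] at h1
    exact h1
  -- RR values
  have rac_a : RR h S (e 1) (e (k-1)) (e 1) = 0 := by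
    simp only [RR, hCA, hAA]; simp
  have rac_c : RR h S (e 1) (e (k-1)) (e (k-1)) = 0 := by
    simp only [RR, hCC, hAC]; simp
  have rac_b : RR h S (e 1) (e (k-1)) (e 2) = (ε*α) • e 1 + ε • e 2 := by
    simp only [RR, hCB, hAB, hSa]; module
  have rac_d : RR h S (e 1) (e (k-1)) (e k) = (-(ε*α)) • e (k-1) + (-ε) • e k := by
    simp only [RR, hCD, hAD, hSc]; module
  have rcd_a : RR h S (e (k-1)) (e k) (e 1) = (ε*α) • e (k-1) + ε • e k := by
    simp only [RR, hDA, hCA, hSc]; module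
  have rcd_b : RR h S (e (k-1)) (e k) (e 2) = (-(ε*α)) • e k := by
    simp only [RR, hDB, hCB, hS2]; module
  have rcd_c : RR h S (e (k-1)) (e k) (e (k-1)) = 0 := by
    simp only [RR, hDC, hCC]; simp
  obtain ⟨q, rfl⟩ : ∃ q, p = q + 1 := ⟨p - 1, by omega⟩
  have hlist : [e (k-1), e k] ++ pairList (e 1) (e (k-1)) (q + 1 - 1) ++ [e 1, e 2] =
      e (k-1) :: e k :: (pairList (e 1) (e (k-1)) q ++ [e 1, e 2]) := by
    simp
  rw [hlist]
  exact main_eval h ω S (e 1) (e 2) (e (k-1)) (e k) ε α hw rac_a rac_c rac_b rac_d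
    rcd_a rcd_b rcd_c q
end
end

section
/- Let k > 3 and p ≥ 1. Then (R^p·ω)(e_1, e_{k−1}, e_1, e_{k−1}, …, e_1, e_{k−1}, e_1, e_3), with p leading pairs (e_1, e_{k−1}) and ending with e_1, e_3, equals 0. -/
noncomputable section

-- helpers
lemma Rpow_succ_s10 {V : Type*} [AddCommGroup V] [Module ℝ V]
    (h : V →ₗ[ℝ] V →ₗ[ℝ] ℝ) (S : V →ₗ[ℝ] V) (ω : V →ₗ[ℝ] V →ₗ[ℝ] ℝ) (p : ℕ) :
    Rpow h S ω (p+1) = RAct h S (Rpow h S ω p) := by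
  unfold Rpow
  rw [Function.iterate_succ_apply']

lemma RAct_cons {V : Type*} [AddCommGroup V] [Module ℝ V]
    (h : V →ₗ[ℝ] V →ₗ[ℝ] ℝ) (S : V →ₗ[ℝ] V) (T : List V → ℝ) (X Y : V) (Zs : List V) :
    RAct h S T (X :: Y :: Zs) =
      -∑ i ∈ Finset.range Zs.length, T (Zs.set i (RR h S X Y (Zs.getD i 0))) := rfl

lemma RR_zero3 {V : Type*} [AddCommGroup V] [Module ℝ V]
    (h : V →ₗ[ℝ] V →ₗ[ℝ] ℝ) (S : V →ₗ[ℝ] V) (X Y : V) : RR h S X Y 0 = 0 := by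
  simp [RR]

lemma RR_zero1 {V : Type*} [AddCommGroup V] [Module ℝ V]
    (h : V →ₗ[ℝ] V →ₗ[ℝ] ℝ) (S : V →ₗ[ℝ] V) (Y Z : V) : RR h S 0 Y Z = 0 := by
  simp [RR]

lemma RR_zero2 {V : Type*} [AddCommGroup V] [Module ℝ V]
    (h : V →ₗ[ℝ] V →ₗ[ℝ] ℝ) (S : V →ₗ[ℝ] V) (X Z : V) : RR h S X 0 Z = 0 := by
  simp [RR]

lemma zero_mem_set {V : Type*} [AddCommGroup V] [Module ℝ V]
    (l : List V) (i : ℕ) (hi : i < l.length) : (0 : V) ∈ l.set i 0 := by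
  have h1 : i < (l.set i 0).length := by simpa using hi
  have h2 : (l.set i 0)[i]'h1 = 0 := by simp
  exact List.mem_iff_getElem.mpr ⟨i, h1, h2⟩

lemma Rpow_zero_mem {V : Type*} [AddCommGroup V] [Module ℝ V]
    (h : V →ₗ[ℝ] V →ₗ[ℝ] ℝ) (S : V →ₗ[ℝ] V) (ω : V →ₗ[ℝ] V →ₗ[ℝ] ℝ) :
    ∀ (p : ℕ) (l : List V), l.length = 2*p+2 → (0:V) ∈ l → Rpow h S ω p l = 0 := by
  intro p
  induction p with
  | zero =>
    intro l hlen hmem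
    match l, hlen with
    | [a, b], _ =>
      simp only [List.mem_cons, List.not_mem_nil, or_false] at hmem
      rcases hmem with h1 | h1 <;>
        · simp [Rpow, ← h1]
  | succ p ih =>
    intro l hlen hmem
    match l with
    | X :: Y :: Zs =>
      have hZ : Zs.length = 2*p+2 := by simp at hlen; omega
      rw [Rpow_succ_s10, RAct_cons, neg_eq_zero]
      refine Finset.sum_eq_zero fun i hi => ?_
      rw [Finset.mem_range] at hi
      simp only [List.mem_cons] at hmem
      rcases hmem with h1 | h1 | h1
      · rw [← h1, RR_zero1]
        exact ih _ (by simpa using hZ) (zero_mem_set _ _ hi)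
      · rw [← h1, RR_zero2]
        exact ih _ (by simpa using hZ) (zero_mem_set _ _ hi)
      · obtain ⟨j, hj, hj0⟩ := List.getElem_of_mem h1
        by_cases hij : i = j
        · subst hij
          rw [List.getD_eq_getElem _ _ hi, hj0, RR_zero3]
          exact ih _ (by simpa using hZ) (zero_mem_set _ _ hi)
        · apply ih _ (by simpa using hZ)
          have hjlen : j < (Zs.set i (RR h S X Y (Zs.getD i 0))).length := by simpa using hj
          have hval : (Zs.set i (RR h S X Y (Zs.getD i 0)))[j]'hjlen = 0 := by
            rw [List.getElem_set_ne (fun hh => hij hh)]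
            exact hj0
          exact List.mem_iff_getElem.mpr ⟨j, hjlen, hval⟩

lemma pairList_length_s10 {V : Type*} (X Y : V) (p : ℕ) : (pairList X Y p).length = 2*p := by
  induction p with
  | zero => rfl
  | succ p ih => simp [pairList, ih]; omega

lemma pairList_mem {V : Type*} (X Y : V) (p : ℕ) :
    ∀ x ∈ pairList X Y p, x = X ∨ x = Y := by
  induction p with
  | zero => intro x hx; simp [pairList] at hx
  | succ p ih =>
    intro x hx
    simp only [pairList, List.mem_cons] at hx
    rcases hx with h1 | h1 | h1
    · exact Or.inl h1
    · exact Or.inr h1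
    · exact ih x h1

theorem stmt10
    {V : Type*} [AddCommGroup V] [Module ℝ V]
    (n : ℕ) (hn : 2 ≤ n) (e : ℕ → V)
    (hbasis : ∃ b : Module.Basis (Fin (2 * n)) ℝ V, ∀ i : Fin (2 * n), b i = e (i.1 + 1))
    (h ω : V →ₗ[ℝ] V →ₗ[ℝ] ℝ)
    (hsymm : ∀ X Y, h X Y = h Y X)
    (halt : ∀ X, ω X X = 0)
    (S : V →ₗ[ℝ] V)
    (k : ℕ) (hk2 : 2 ≤ k) (hk : k ≤ 2 * n)
    (α ε : ℝ) (hε : ε = 1 ∨ ε = -1)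
    (hS1 : ∀ i, 1 ≤ i → i ≤ k - 1 → S (e i) = α • e i + e (i + 1))
    (hS2 : S (e k) = α • e k)
    (hh1 : ∀ i j, 1 ≤ i → i ≤ k → 1 ≤ j → j ≤ k → i + j = k + 1 → h (e i) (e j) = ε)
    (hh0 : ∀ i j, 1 ≤ i → i ≤ 2 * n → 1 ≤ j → j ≤ 2 * n → min i j ≤ k →
      ¬(i ≤ k ∧ j ≤ k ∧ i + j = k + 1) → h (e i) (e j) = 0)
    (hk3 : 3 < k)
    (p : ℕ) (hp : 1 ≤ p) :
    Rpow h S ω p (pairList (e 1) (e (k - 1)) p ++ [e 1, e 3]) = 0 := by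
  obtain ⟨q, rfl⟩ : ∃ q, p = q + 1 := ⟨p - 1, by omega⟩
  -- key h-vanishing facts
  have hzero : ∀ i j : ℕ, 1 ≤ i → i ≤ 2*n → 1 ≤ j → j ≤ 2*n → min i j ≤ k →
      i + j ≠ k + 1 → h (e i) (e j) = 0 := by
    intro i j h1 h2 h3 h4 h5 h6
    exact hh0 i j h1 h2 h3 h4 h5 (by omega)
  have hRR : ∀ Z, Z = e 1 ∨ Z = e (k-1) ∨ Z = e 3 →
      RR h S (e 1) (e (k-1)) Z = 0 := by
    intro Z hZ
    have hb1 : (1:ℕ) ≤ 2*n := by omega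
    have hb3 : (3:ℕ) ≤ 2*n := by omega
    have hbk : k - 1 ≤ 2*n := by omega
    have hbk1 : (1:ℕ) ≤ k - 1 := by omega
    rcases hZ with rfl | rfl | rfl
    · rw [RR, hzero (k-1) 1 hbk1 hbk le_rfl hb1 (by omega) (by omega),
        hzero 1 1 le_rfl hb1 le_rfl hb1 (by omega) (by omega)]
      simp
    · rw [RR, hzero (k-1) (k-1) hbk1 hbk hbk1 hbk (by omega) (by omega),
        hzero 1 (k-1) le_rfl hb1 hbk1 hbk (by omega) (by omega)]
      simp
    · rw [RR, hzero (k-1) 3 hbk1 hbk (by omega) hb3 (by omega) (by omega),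
        hzero 1 3 le_rfl hb1 (by omega) hb3 (by omega) (by omega)]
      simp
  have hl : pairList (e 1) (e (k-1)) (q+1) ++ [e 1, e 3] =
      e 1 :: e (k-1) :: (pairList (e 1) (e (k-1)) q ++ [e 1, e 3]) := by
    simp [pairList]
  set Zs := pairList (e 1) (e (k-1)) q ++ [e 1, e 3] with hZs
  have hZlen : Zs.length = 2*q+2 := by
    simp [hZs, pairList_length_s10]
  rw [hl, Rpow_succ_s10, RAct_cons, neg_eq_zero]
  refine Finset.sum_eq_zero fun i hi => ?_
  rw [Finset.mem_range] at hi
  have hmem : Zs.getD i 0 ∈ Zs := by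
    rw [List.getD_eq_getElem _ _ hi]
    exact List.getElem_mem hi
  have hcase : Zs.getD i 0 = e 1 ∨ Zs.getD i 0 = e (k-1) ∨ Zs.getD i 0 = e 3 := by
    rw [hZs] at hmem
    rw [List.mem_append] at hmem
    rcases hmem with hm | hm
    · rcases pairList_mem _ _ _ _ hm with h1 | h1
      · exact Or.inl h1
      · exact Or.inr (Or.inl h1)
    · simp only [List.mem_cons, List.not_mem_nil, or_false] at hm
      rcases hm with h1 | h1
      · exact Or.inl h1
      · exact Or.inr (Or.inr h1)
  rw [hRR _ hcase]
  exact Rpow_zero_mem h S ω q _ (by simpa using hZlen) (zero_mem_set _ _ (hZlen ▸ hi))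
end
end
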